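/- For every parameter tuple (h,j,k,1) with k ∈ {0,…,q_0−1}, j ∈ {0,…,q_0−1}, and max{1, m_{j,k,1}} ≤ h ≤ 2q_0, the integer n_{h,j,k,1} = hq − (1+2k)q_0 − j belongs to the additive submonoid of ℕ generated by G_1. -/

import Mathlib

/-- `q₀ = 2^s`. -/
def q0 (s : ℕ) : ℕ := 2 ^ s

/-- `q = 2 q₀²`. -/
def qS (s : ℕ) : ℕ := 2 * q0 s ^ 2

/-- `m_{j,k,ℓ} = ⌈(q₀/(q₀−1))·(j + k + ℓ − (k+ℓ)/q)⌉`. -/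
def mval (s j k l : ℕ) : ℤ :=
  ⌈((q0 s : ℚ) / ((q0 s : ℚ) - 1)) *
    ((j : ℚ) + (k : ℚ) + (l : ℚ) - ((k : ℚ) + (l : ℚ)) / (qS s : ℚ))⌉

/-- `F₁ = { hq − (ℓ+2k)q₀ − j : ℓ ∈ {0,1}, k,j ∈ {0,…,q₀−1},
    h ∈ {max{1, m_{j,k,ℓ}},…,2q₀} }`. -/
def F1 (s : ℕ) : Set ℕ :=
  {n | ∃ h j k l : ℕ, l ≤ 1 ∧ k < q0 s ∧ j < q0 s ∧
    max 1 (mval s j k l) ≤ (h : ℤ) ∧ h ≤ 2 * q0 s ∧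
    n = h * qS s - (l + 2 * k) * q0 s - j}

/-- `F₂ = { hq − (2h−2q₀−1)q₀ − (q₀−1) : h ∈ {q₀+1,…,2q₀} }`. -/
def F2 (s : ℕ) : Set ℕ :=
  {n | ∃ h : ℕ, q0 s + 1 ≤ h ∧ h ≤ 2 * q0 s ∧
    n = h * qS s - (2 * h - 2 * q0 s - 1) * q0 s - (q0 s - 1)}

/-- `G₁ = { hq − kq₀ − ⌊(2h−k−2)/2⌋ : h ∈ {1,…,q₀}, k ∈ {0,…,2h−2} }`. -/
def G1 (s : ℕ) : Set ℕ :=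
  {n | ∃ h k : ℕ, 1 ≤ h ∧ h ≤ q0 s ∧ k ≤ 2 * h - 2 ∧
    n = h * qS s - k * q0 s - (2 * h - k - 2) / 2}

/-- Every `n_{h,j,k,1} = hq − (1+2k)q₀ − j ∈ F₁` belongs to `⟨G₁⟩`. -/
lemma mv1 (s j k : ℕ) (hs : 1 ≤ s) (hk : k < q0 s) :
    (j + k + 2 : ℤ) ≤ mval s j k 1 := by
  have hQ2 : (2:ℕ) ≤ q0 s := by
    calc (2:ℕ) = 2^1 := rfl
    _ ≤ 2^s := Nat.pow_le_pow_right (by norm_num) hs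
  have hQ : (2:ℚ) ≤ (q0 s : ℚ) := by exact_mod_cast hQ2
  have hkQ : (k:ℚ) + 1 ≤ (q0 s : ℚ) := by exact_mod_cast hk
  have hqs : ((qS s : ℕ) : ℚ) = 2 * (q0 s : ℚ)^2 := by
    rw [qS]; push_cast; ring
  rw [show (j + k + 2 : ℤ) = (j + k + 1 : ℤ) + 1 from by ring, Int.add_one_le_iff,
    mval, Int.lt_ceil]
  rw [hqs]
  set Q : ℚ := (q0 s : ℚ) with hQdef
  have h1 : (0:ℚ) < Q - 1 := by linarith
  have h2 : (0:ℚ) < 2 * Q^2 := by positivity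
  rw [div_mul_eq_mul_div, lt_div_iff₀ h1]
  have h3 : ((k:ℚ) + 1) / (2 * Q^2) ≤ 1 / (2 * Q) := by
    rw [div_le_div_iff₀ h2 (by linarith)]
    nlinarith
  have h4 : Q * (((k:ℚ)+1)/(2*Q^2)) ≤ 1/2 := by
    rw [mul_comm, div_mul_eq_mul_div, div_le_iff₀ (by positivity : (0:ℚ) < 2*Q^2)]
    nlinarith
  push_cast
  nlinarith [h4, Nat.cast_nonneg (α := ℚ) j, Nat.cast_nonneg (α := ℚ) k]

lemma mv2 (s j k : ℕ) (hs : 1 ≤ s) (hk : k < q0 s) (hjk : q0 s ≤ j + k + 1) :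
    (j + k + 3 : ℤ) ≤ mval s j k 1 := by
  have hQ2 : (2:ℕ) ≤ q0 s := by
    calc (2:ℕ) = 2^1 := rfl
    _ ≤ 2^s := Nat.pow_le_pow_right (by norm_num) hs
  have hQ : (2:ℚ) ≤ (q0 s : ℚ) := by exact_mod_cast hQ2
  have hkQ : (k:ℚ) + 1 ≤ (q0 s : ℚ) := by exact_mod_cast hk
  have hjkQ : (q0 s : ℚ) ≤ (j:ℚ) + (k:ℚ) + 1 := by exact_mod_cast hjk
  have hqs : ((qS s : ℕ) : ℚ) = 2 * (q0 s : ℚ)^2 := by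
    rw [qS]; push_cast; ring
  rw [show (j + k + 3 : ℤ) = (j + k + 2 : ℤ) + 1 from by ring, Int.add_one_le_iff,
    mval, Int.lt_ceil]
  rw [hqs]
  set Q : ℚ := (q0 s : ℚ) with hQdef
  have h1 : (0:ℚ) < Q - 1 := by linarith
  have h2 : (0:ℚ) < 2 * Q^2 := by positivity
  rw [div_mul_eq_mul_div, lt_div_iff₀ h1]
  have h3 : ((k:ℚ) + 1) / (2 * Q^2) ≤ 1 / (2 * Q) := by
    rw [div_le_div_iff₀ h2 (by linarith)]
    nlinarith
  have h4 : Q * (((k:ℚ)+1)/(2*Q^2)) ≤ 1/2 := by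
    rw [mul_comm, div_mul_eq_mul_div, div_le_iff₀ (by positivity : (0:ℚ) < 2*Q^2)]
    nlinarith
  push_cast
  nlinarith [h4, Nat.cast_nonneg (α := ℚ) j, Nat.cast_nonneg (α := ℚ) k]

theorem stmt11 (s : ℕ) (hs : 1 ≤ s) (h j k : ℕ)
    (hk : k < q0 s) (hj : j < q0 s)
    (hhm : max 1 (mval s j k 1) ≤ (h : ℤ)) (hh : h ≤ 2 * q0 s) :
    h * qS s - (1 + 2 * k) * q0 s - j ∈ AddSubmonoid.closure (G1 s) := by
  have hQ2 : (2:ℕ) ≤ q0 s := by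
    calc (2:ℕ) = 2^1 := rfl
    _ ≤ 2^s := Nat.pow_le_pow_right (by norm_num) hs
  set Q := q0 s with hQdef
  have hq : qS s = 2 * Q^2 := rfl
  have hqmem : qS s ∈ G1 s := by
    refine ⟨1, 0, le_refl _, by omega, by omega, ?_⟩
    simp
  have hm1 : (j + k + 2 : ℤ) ≤ mval s j k 1 := mv1 s j k hs hk
  have hh1 : j + k + 2 ≤ h := by
    have := le_trans (le_trans hm1 (le_max_right 1 _)) hhm
    exact_mod_cast this
  by_cases hcase : j + k + 2 ≤ Q
  · -- one generator plus copies of q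
    obtain ⟨d, hd⟩ : ∃ d, h = (j + k + 2) + d := ⟨h - (j+k+2), by omega⟩
    have hg1 : (j+k+2) * qS s - (2*k+1) * Q - j ∈ G1 s := by
      refine ⟨j+k+2, 2*k+1, by omega, hcase, by omega, ?_⟩
      rw [show (2*(j+k+2) - (2*k+1) - 2)/2 = j from by omega]
    have key : h * qS s - (1 + 2*k) * Q - j
        = ((j+k+2) * qS s - (2*k+1) * Q - j) + d * qS s := by
      subst hd
      have e1 : ((j+k+2) + d) * qS s = (j+k+2) * qS s + d * qS s := by ring
      have e2 : (1 + 2*k) * Q = 2*(k*Q) + Q := by ring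
      have e3 : (2*k+1) * Q = 2*(k*Q) + Q := by ring
      have hb : 2*(k*Q) + Q + j < (j+k+2) * qS s := by
        have hb1 : 2*(k*Q) + Q + j < 2*Q^2 := by nlinarith
        nlinarith
      rw [e1, e2, e3]
      omega
    rw [key]
    exact AddSubmonoid.add_mem _ (AddSubmonoid.subset_closure hg1)
      (by
        rw [show d * qS s = d • qS s from (smul_eq_mul _ _).symm]
        exact AddSubmonoid.nsmul_mem _ (AddSubmonoid.subset_closure hqmem) d)
  · -- two generators plus copies of q
    push_neg at hcase
    have hjk : Q ≤ j + k + 1 := by omega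
    have hm2 : (j + k + 3 : ℤ) ≤ mval s j k 1 := mv2 s j k hs hk hjk
    have hh2 : j + k + 3 ≤ h := by
      have := le_trans (le_trans hm2 (le_max_right 1 _)) hhm
      exact_mod_cast this
    set a1 := j + k + 3 - Q with ha1
    have ha1ge : 2 ≤ a1 := by omega
    have ha1le : a1 ≤ Q := by omega
    obtain ⟨d, hd⟩ : ∃ d, h = a1 + Q + d := ⟨h - (a1 + Q), by omega⟩
    have hg1 : a1 * qS s - 1 * Q - (a1 - 2) ∈ G1 s := by
      refine ⟨a1, 1, by omega, ha1le, by omega, ?_⟩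
      rw [show (2*a1 - 1 - 2)/2 = a1 - 2 from by omega]
    have hg2 : Q * qS s - 2*(k*Q) - (Q - k - 1) ∈ G1 s := by
      refine ⟨Q, 2*k, by omega, le_refl _, by omega, ?_⟩
      rw [show (2*Q - 2*k - 2)/2 = Q - k - 1 from by omega,
        show (2*k) * Q = 2*(k*Q) from by ring]
    have key : h * qS s - (1 + 2*k) * Q - j
        = (a1 * qS s - 1 * Q - (a1 - 2)) + (Q * qS s - 2*(k*Q) - (Q - k - 1))
          + d * qS s := by
      subst hd
      have e1 : (a1 + Q + d) * qS s = a1 * qS s + Q * qS s + d * qS s := by ring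
      have e2 : (1 + 2*k) * Q = 2*(k*Q) + Q := by ring
      have hb1 : 1 * Q + a1 < a1 * qS s := by nlinarith
      have hb2 : 2*(k*Q) + Q < Q * qS s := by nlinarith
      rw [e1, e2]
      omega
    rw [key]
    refine AddSubmonoid.add_mem _ (AddSubmonoid.add_mem _
      (AddSubmonoid.subset_closure hg1) (AddSubmonoid.subset_closure hg2)) ?_
    rw [show d * qS s = d • qS s from (smul_eq_mul _ _).symm]
    exact AddSubmonoid.nsmul_mem _ (AddSubmonoid.subset_closure hqmem) d
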